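/- Let ω > 0, C > 0, λ_0, λ_1, λ_2 ∈ ℝ, and let φ be a real polynomial function with φ(y) > 0 for all y > 0. Suppose that for all y > 0 the stationary density formula matches the exponential-family density: C φ(y) y^{-2} exp(2 ∫_1^y (ω − φ(u))/u du) = exp(λ_0 + λ_1 y + λ_2 log y), and suppose this common function q satisfies ∫_0^∞ q(y) dy = 1 and ∫_0^∞ y q(y) dy = ω. Then φ(y) = y for all y > 0. -/

import Mathlib

open MeasureTheory intervalIntegral

section aux

open Polynomial Set Real

lemma aux_ode (ω C : ℝ) (hC : 0 < C) (l0 l1 l2 : ℝ) (φ : Polynomial ℝ)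
    (hφpos : ∀ y > (0:ℝ), 0 < φ.eval y)
    (hmatch : ∀ y > (0:ℝ),
      C * φ.eval y / y ^ 2 * Real.exp (2 * ∫ u in (1:ℝ)..y, (ω - φ.eval u) / u) =
        Real.exp (l0 + l1 * y + l2 * Real.log y)) :
    ∀ y > (0:ℝ), y * φ.derivative.eval y =
      l1 * y * φ.eval y + (l2 + 2 - 2*ω) * φ.eval y + 2 * (φ.eval y)^2 := by
  set f : ℝ → ℝ := fun u => (ω - φ.eval u) / u with hf
  set g : ℝ → ℝ := fun t => ∫ u in (1:ℝ)..t, f u with hg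
  set L : ℝ → ℝ := fun t => Real.log C + Real.log (φ.eval t) - 2 * Real.log t + 2 * g t with hL
  set R : ℝ → ℝ := fun t => l0 + l1 * t + l2 * Real.log t with hR
  have hLR : ∀ t ∈ Set.Ioi (0:ℝ), L t = R t := by
    intro t ht
    have ht0 : (0:ℝ) < t := ht
    have hφt := hφpos t ht0
    have h := hmatch t ht0
    have hlog := congrArg Real.log h
    rw [Real.log_exp] at hlog
    rw [Real.log_mul (by positivity) (Real.exp_ne_zero _), Real.log_exp,
      Real.log_div (by positivity) (by positivity),
      Real.log_mul (ne_of_gt hC) (ne_of_gt hφt), Real.log_pow] at hlog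
    simp only [L, R, g, f]
    push_cast at hlog ⊢
    linarith [hlog]
  intro y hy
  have hy0 : y ≠ 0 := ne_of_gt hy
  have hφy : (0:ℝ) < φ.eval y := hφpos y hy
  -- derivative of g
  have hfc : ∀ u : ℝ, u ≠ 0 → ContinuousAt f u := by
    intro u hu
    exact (continuousAt_const.sub (φ.continuousAt)).div continuousAt_id hu
  have hint : IntervalIntegrable f volume 1 y := by
    apply ContinuousOn.intervalIntegrable
    intro u hu
    have h1 : (1:ℝ) ⊓ y ≤ u := hu.1
    have hu0 : u ≠ 0 := ne_of_gt (lt_of_lt_of_le (lt_min one_pos hy) h1)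
    exact (hfc u hu0).continuousWithinAt
  have hmeas : StronglyMeasurableAtFilter f (nhds y) := by
    refine ⟨Set.univ, Filter.univ_mem, ?_⟩
    exact ((measurable_const.sub φ.continuous_aeval.measurable).div
      measurable_id).aestronglyMeasurable
  have hg' : HasDerivAt g (f y) y :=
    intervalIntegral.integral_hasDerivAt_right hint hmeas (hfc y hy0)
  have hlogφ : HasDerivAt (fun t => Real.log (φ.eval t)) (φ.derivative.eval y / φ.eval y) y :=
    (φ.hasDerivAt y).log (ne_of_gt hφy)
  have hlogt : HasDerivAt Real.log y⁻¹ y := Real.hasDerivAt_log hy0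
  have hLd : HasDerivAt L (φ.derivative.eval y / φ.eval y - 2 * y⁻¹ + 2 * f y) y := by
    exact (((hlogφ.const_add (Real.log C)).sub (hlogt.const_mul 2)).add (hg'.const_mul 2))
  have hRd : HasDerivAt R (l1 + l2 * y⁻¹) y := by
    have : HasDerivAt (fun t : ℝ => l0 + l1 * t) (l1 * 1) y :=
      ((hasDerivAt_id y).const_mul l1).const_add l0
    exact (this.add (hlogt.const_mul l2)).congr_deriv (by ring)
  have hev : L =ᶠ[nhds y] R :=
    Filter.eventuallyEq_of_mem (Ioi_mem_nhds hy) hLR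
  have hRd2 : HasDerivAt R (φ.derivative.eval y / φ.eval y - 2 * y⁻¹ + 2 * f y) y :=
    hLd.congr_of_eventuallyEq hev.symm
  have heq := hRd2.unique hRd
  have : φ.derivative.eval y / φ.eval y - 2 * y⁻¹ + 2 * ((ω - φ.eval y) / y)
      = l1 + l2 * y⁻¹ := heq
  field_simp at this
  have h2 : y^2 * (y * φ.derivative.eval y) =
      y^2 * (l1 * y * φ.eval y + (l2 + 2 - 2*ω) * φ.eval y + 2 * (φ.eval y)^2) := by
    linear_combination y^2 * this
  exact mul_left_cancel₀ (pow_ne_zero 2 hy0) h2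

end aux

theorem volatilityFunction_eq_identity
    (ω C : ℝ) (hω : 0 < ω) (hC : 0 < C) (l0 l1 l2 : ℝ) (φ : Polynomial ℝ)
    (hφpos : ∀ y > (0:ℝ), 0 < φ.eval y)
    (hmatch : ∀ y > (0:ℝ),
      C * φ.eval y / y ^ 2 * Real.exp (2 * ∫ u in (1:ℝ)..y, (ω - φ.eval u) / u) =
        Real.exp (l0 + l1 * y + l2 * Real.log y))
    (hnorm : ∫ y in Set.Ioi (0:ℝ), Real.exp (l0 + l1 * y + l2 * Real.log y) = 1)
    (hmean : ∫ y in Set.Ioi (0:ℝ), y * Real.exp (l0 + l1 * y + l2 * Real.log y) = ω) :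
    ∀ y > (0:ℝ), φ.eval y = y := by
  have key := aux_ode ω C hC l0 l1 l2 φ hφpos hmatch
  set c : ℝ := l2 + 2 - 2*ω with hc
  -- polynomial identity
  have hpoly : Polynomial.X * φ.derivative =
      Polynomial.C l1 * Polynomial.X * φ + Polynomial.C c * φ + 2 * φ^2 := by
    have hinf : {x : ℝ | (Polynomial.X * φ.derivative -
        (Polynomial.C l1 * Polynomial.X * φ + Polynomial.C c * φ + 2 * φ^2)).IsRoot x}.Infinite := by
      apply (Set.Ioi_infinite (0:ℝ)).mono
      intro y hy
      simp only [Set.mem_setOf_eq, Polynomial.IsRoot, Polynomial.eval_sub, Polynomial.eval_mul,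
        Polynomial.eval_add, Polynomial.eval_X, Polynomial.eval_C, Polynomial.eval_pow,
        Polynomial.eval_ofNat]
      have h := key y hy
      nlinarith [h]
    have h0 := Polynomial.eq_zero_of_infinite_isRoot _ hinf
    rw [sub_eq_zero] at h0
    exact h0
  have hφ0 : φ ≠ 0 := by
    intro h
    have := hφpos 1 one_pos
    rw [h] at this
    simp at this
  -- degree bound
  have hdeg : φ.natDegree ≤ 1 := by
    by_contra hcon
    push_neg at hcon
    have h2eq : (2:Polynomial ℝ) * φ^2 = Polynomial.X * φ.derivative
        - Polynomial.C l1 * Polynomial.X * φ - Polynomial.C c * φ := by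
      linear_combination -hpoly
    have hd2 : ((2:Polynomial ℝ) * φ^2).natDegree = 2 * φ.natDegree := by
      rw [Polynomial.natDegree_mul (by norm_num) (pow_ne_zero 2 hφ0),
        Polynomial.natDegree_pow]
      norm_num
    have hA : (Polynomial.X * φ.derivative).natDegree ≤ φ.natDegree + 1 := by
      refine le_trans (Polynomial.natDegree_mul_le) ?_
      have := Polynomial.natDegree_derivative_le φ
      simp only [Polynomial.natDegree_X]
      omega
    have hB : (Polynomial.C l1 * Polynomial.X * φ).natDegree ≤ φ.natDegree + 1 := by
      refine le_trans (Polynomial.natDegree_mul_le) ?_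
      have := Polynomial.natDegree_mul_le (p := Polynomial.C l1) (q := Polynomial.X)
      simp only [Polynomial.natDegree_C, Polynomial.natDegree_X] at this ⊢
      omega
    have hCc : (Polynomial.C c * φ).natDegree ≤ φ.natDegree + 1 := by
      refine le_trans (Polynomial.natDegree_mul_le) ?_
      simp only [Polynomial.natDegree_C]
      omega
    have hfin : ((2:Polynomial ℝ) * φ^2).natDegree ≤ φ.natDegree + 1 := by
      rw [h2eq]
      refine le_trans (Polynomial.natDegree_sub_le _ _) ?_
      refine max_le (le_trans (Polynomial.natDegree_sub_le _ _) (max_le hA hB)) hCc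
    omega
  obtain ⟨q, p, hform⟩ := Polynomial.exists_eq_X_add_C_of_natDegree_le_one hdeg
  have heval : ∀ y : ℝ, φ.eval y = q * y + p := by
    intro y
    simp [hform]
  have hder : ∀ y : ℝ, φ.derivative.eval y = q := by
    intro y
    simp [hform]
  have key2 : ∀ y > (0:ℝ), y * q = l1 * y * (q*y+p) + c * (q*y+p) + 2 * (q*y+p)^2 := by
    intro y hy
    have := key y hy
    rw [heval, hder] at this
    exact this
  have e1 := key2 1 one_pos
  have e2 := key2 2 two_pos
  have e3 := key2 3 (by norm_num)
  have hD : l1 * q + 2 * q^2 = 0 := by nlinarith [e1, e2, e3]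
  have hB : q = l1 * p + c * q + 4 * p * q := by nlinarith [e1, e2, e3]
  have hA : c * p + 2 * p^2 = 0 := by nlinarith [e1, e2, e3]
  by_cases hq : q = 0
  · -- constant case: contradiction with normalization
    exfalso
    have hp : 0 < p := by
      have := hφpos 1 one_pos
      rw [heval] at this; rw [hq] at this; linarith
    have hl1 : l1 = 0 := by
      rw [hq] at hB
      have : l1 * p = 0 := by linarith
      rcases mul_eq_zero.mp this with h | h
      · exact h
      · exact absurd h (ne_of_gt hp)
    have hni : ¬ IntegrableOn (fun y => Real.exp (l0 + l1*y + l2*Real.log y))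
        (Set.Ioi (0:ℝ)) volume := by
      intro h
      have h2 : IntegrableOn
          (fun y : ℝ => Real.exp (-l0) * Real.exp (l0 + l1*y + l2*Real.log y))
          (Set.Ioi (0:ℝ)) volume := h.const_mul _
      have h3 : IntegrableOn (fun y : ℝ => y ^ l2) (Set.Ioi (0:ℝ)) volume := by
        refine h2.congr_fun ?_ measurableSet_Ioi
        intro y hy
        have hy0 : (0:ℝ) < y := hy
        simp only
        rw [Real.rpow_def_of_pos hy0, ← Real.exp_add, hl1]
        ring_nf
      exact not_integrableOn_Ioi_rpow l2 h3
    have h0 := MeasureTheory.integral_undef hni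
    rw [hnorm] at h0
    norm_num at h0
  · -- linear case
    have hl1 : l1 = -2*q := by
      have : q * (l1 + 2*q) = 0 := by linear_combination hD
      rcases mul_eq_zero.mp this with h | h
      · exact absurd h hq
      · linarith
    have hcp : c + 2*p = 1 := by
      have : q * (c + 2*p - 1) = 0 := by linear_combination -hB - p * hl1
      rcases mul_eq_zero.mp this with h | h
      · exact absurd h hq
      · linarith
    have hp0 : p = 0 := by linear_combination hA - p * hcp
    have hqpos : 0 < q := by
      have := hφpos 1 one_pos
      rw [heval] at this; rw [hp0] at this; linarith
    have hl2 : l2 = 2*ω - 1 := by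
      have : c = 1 := by rw [hp0] at hcp; linarith
      rw [hc] at this; linarith
    have h2q : (0:ℝ) < 2*q := by linarith
    have h2ω : (0:ℝ) < 2*ω := by linarith
    -- rewrite the two integrals as Gamma integrals
    have hEq1 : Set.EqOn (fun y => Real.exp (l0 + l1*y + l2*Real.log y))
        (fun y : ℝ => Real.exp l0 * (y ^ (2*ω - 1) * Real.exp (-(2*q*y)))) (Set.Ioi 0) := by
      intro y hy
      have hy0 : (0:ℝ) < y := hy
      simp only
      rw [Real.rpow_def_of_pos hy0, ← Real.exp_add, ← Real.exp_add, hl1, hl2]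
      ring_nf
    have hEq2 : Set.EqOn (fun y => y * Real.exp (l0 + l1*y + l2*Real.log y))
        (fun y : ℝ => Real.exp l0 * (y ^ (2*ω + 1 - 1) * Real.exp (-(2*q*y)))) (Set.Ioi 0) := by
      intro y hy
      have hy0 : (0:ℝ) < y := hy
      have h1 := hEq1 hy
      simp only at h1 ⊢
      rw [h1, show (2*ω+1-1 : ℝ) = 1 + (2*ω-1) by ring, Real.rpow_add hy0, Real.rpow_one]
      ring
    have hG1 := Real.integral_rpow_mul_exp_neg_mul_Ioi h2ω h2q
    have hG2 := Real.integral_rpow_mul_exp_neg_mul_Ioi (show (0:ℝ) < 2*ω+1 by linarith) h2q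
    have hI1 : Real.exp l0 * ((1/(2*q)) ^ (2*ω) * Real.Gamma (2*ω)) = 1 := by
      have hcongr := MeasureTheory.setIntegral_congr_fun (μ := volume) measurableSet_Ioi hEq1
      rw [← hG1, ← MeasureTheory.integral_const_mul, ← hcongr]
      exact hnorm
    have hI2 : Real.exp l0 * ((1/(2*q)) ^ (2*ω+1) * Real.Gamma (2*ω+1)) = ω := by
      have hcongr := MeasureTheory.setIntegral_congr_fun (μ := volume) measurableSet_Ioi hEq2
      rw [← hG2, ← MeasureTheory.integral_const_mul, ← hcongr]
      exact hmean
    have hGadd : Real.Gamma (2*ω+1) = 2*ω * Real.Gamma (2*ω) := Real.Gamma_add_one (ne_of_gt h2ω)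
    have hradd : (1/(2*q) : ℝ) ^ (2*ω+1) = (1/(2*q)) ^ (2*ω) * (1/(2*q)) := by
      rw [Real.rpow_add (by positivity), Real.rpow_one]
    have hq1 : q = 1 := by
      rw [hGadd, hradd] at hI2
      have h2 : (1/(2*q)) * (2*ω) * (Real.exp l0 * ((1/(2*q)) ^ (2*ω) * Real.Gamma (2*ω))) = ω := by
        linear_combination hI2
      rw [hI1, mul_one] at h2
      field_simp at h2
      have h3 : 2*ω*q = 2*ω*1 := by rw [← h2]
      have := mul_left_cancel₀ (ne_of_gt h2ω) h3
      linarith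
    intro y hy
    rw [heval, hq1, hp0]
    ring
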